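/- arXiv:1304.4567 — 3 statements merged into one kernel-verified Lean document; each statement's English description precedes it below -/
import Mathlib

section
/- For almost every real n×m matrix A (in the Lebesgue sense) and for any δ>0, there are at most finitely many integer vectors q ∈ ℤ^m such that ‖Aq − p‖_∞ < ‖q‖_∞^(−m/n−δ) for some p ∈ ℤ^n. -/
open MeasureTheory ENNReal Set

-- Borel–Cantelli
lemma myBC {α ι : Type*} [MeasurableSpace α] {μ : Measure α} [Countable ι]
    {E : ι → Set α} (hE : ∀ i, MeasurableSet (E i)) (h : ∑' i, μ (E i) ≠ ⊤) :
    ∀ᵐ a ∂μ, {i | a ∈ E i}.Finite := by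
  have hmeas : Measurable fun a => ∑' i, (E i).indicator (1 : α → ℝ≥0∞) a :=
    Measurable.ennreal_tsum fun i => measurable_one.indicator (hE i)
  have hint : ∫⁻ a, ∑' i, (E i).indicator (1 : α → ℝ≥0∞) a ∂μ = ∑' i, μ (E i) := by
    rw [lintegral_tsum fun i => (measurable_one.indicator (hE i)).aemeasurable]
    exact tsum_congr fun i => lintegral_indicator_one (hE i)
  filter_upwards [ae_lt_top hmeas (hint ▸ h)] with a ha
  by_contra hinf
  rw [← Set.Infinite] at hinf
  have : ∑' i, (E i).indicator (1 : α → ℝ≥0∞) a = ⊤ := by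
    have h1 : ∀ i, (E i).indicator (1 : α → ℝ≥0∞) a = {i | a ∈ E i}.indicator 1 i := by
      intro i
      by_cases hi : a ∈ E i <;> simp [Set.indicator_apply, hi]
    calc ∑' i, (E i).indicator (1 : α → ℝ≥0∞) a
        = ∑' i, {i | a ∈ E i}.indicator (1 : ι → ℝ≥0∞) i := tsum_congr h1
      _ = ∑' i : {i | a ∈ E i}, (1 : ℝ≥0∞) := (tsum_subtype _ _).symm
      _ = ⊤ := by
          have := hinf.to_subtype
          exact tsum_const_eq_top_of_ne_zero one_ne_zero
  exact absurd (this ▸ ha) (lt_irrefl _)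

-- tsum over pi type of a product
lemma myTsumPi (m : ℕ) (g : ℤ → ℝ≥0∞) :
    ∑' q : Fin m → ℤ, ∏ j, g (q j) = (∑' k : ℤ, g k) ^ m := by
  induction m with
  | zero =>
    rw [pow_zero, tsum_congr (fun q : Fin 0 → ℤ => (by simp : (∏ j, g (q j)) = 1))]
    exact tsum_eq_single (fun _ => 0) fun b hb => absurd (Subsingleton.elim b _) hb
  | succ m ih =>
    rw [← (Fin.consEquiv fun _ : Fin (m+1) => ℤ).tsum_eq (fun q => ∏ j, g (q j))]
    have : ∀ x : ℤ × (Fin m → ℤ),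
        (∏ j, g (((Fin.consEquiv fun _ : Fin (m+1) => ℤ) x) j)) = g x.1 * ∏ j, g (x.2 j) := by
      intro ⟨k, r⟩
      rw [Fin.prod_univ_succ]
      simp [Fin.consEquiv]
    rw [tsum_congr this, ENNReal.tsum_prod']
    simp_rw [ENNReal.tsum_mul_left]
    rw [ENNReal.tsum_mul_right, ih, pow_succ, mul_comm]

lemma myDet {m : ℕ} (j₀ : Fin m) (q : Fin m → ℤ) :
    ((1 : Matrix (Fin m) (Fin m) ℝ).updateRow j₀ fun j => (q j : ℝ)).det = (q j₀ : ℝ) := by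
  have h : (fun j => (q j : ℝ)) = ∑ k, (q k : ℝ) • (1 : Matrix (Fin m) (Fin m) ℝ) k := by
    funext j
    simp [Matrix.one_apply, Finset.sum_apply, Finset.sum_ite_eq]
  rw [h, Matrix.det_updateRow_sum]
  simp

lemma myRow (m : ℕ) (R ψ : ℝ) (hR : 1 ≤ R) (hψ : 0 < ψ) (hψ1 : ψ ≤ 1)
    (q : Fin m → ℤ) (j₀ : Fin m) (hj : ∀ j, |q j| ≤ |q j₀|) (hq0 : 1 ≤ |q j₀|) :
    volume {a : Fin m → ℝ | (∀ j, |a j| ≤ R) ∧ ∃ p : ℤ, |∑ j, a j * (q j : ℝ) - (p : ℝ)| < ψ}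
      ≤ ENNReal.ofReal ((2*m*R + 5) * (2*ψ) * (2*R)^(m-1)) := by
  set Q : ℝ := |(q j₀ : ℝ)| with hQdef
  have hQ1 : (1 : ℝ) ≤ Q := by
    rw [hQdef, ← Int.cast_abs]
    exact_mod_cast hq0
  have hQ0 : (0:ℝ) < Q := lt_of_lt_of_le one_pos hQ1
  set N : ℕ := ⌈R * m * Q⌉₊ + 1 with hNdef
  set s : Finset ℤ := Finset.Icc (-(N:ℤ)) N with hsdef
  set t : Fin m → Set ℝ := fun j =>
    if j = j₀ then ⋃ p ∈ s, Ioo ((p:ℝ) - ψ) ((p:ℝ) + ψ) else Icc (-R) R with htdef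
  set M : Matrix (Fin m) (Fin m) ℝ := (1 : Matrix (Fin m) (Fin m) ℝ).updateRow j₀
    (fun j => (q j : ℝ)) with hMdef
  set L : (Fin m → ℝ) →ₗ[ℝ] (Fin m → ℝ) := Matrix.toLin' M with hLdef
  have hdet : LinearMap.det L = (q j₀ : ℝ) := by rw [hLdef, LinearMap.det_toLin', hMdef, myDet]
  have hdet0 : LinearMap.det L ≠ 0 := by
    rw [hdet]; intro h; rw [hQdef, h, abs_zero] at hQ1; linarith
  -- the subset inclusion
  have hsub : {a : Fin m → ℝ | (∀ j, |a j| ≤ R) ∧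
      ∃ p : ℤ, |∑ j, a j * (q j : ℝ) - (p : ℝ)| < ψ} ⊆ L ⁻¹' (Set.pi Set.univ t) := by
    rintro a ⟨hbox, p, hp⟩
    have hLa : ∀ j, L a j = ∑ k, M j k * a k := by
      intro j
      rw [hLdef, Matrix.toLin'_apply]
      rfl
    intro j _
    by_cases hjj : j = j₀
    · subst hjj
      have hval : L a j = ∑ k, a k * (q k : ℝ) := by
        rw [hLa]
        simp only [hMdef, Matrix.updateRow_self]
        exact Finset.sum_congr rfl fun k _ => mul_comm _ _
      have hbound : |∑ k, a k * (q k : ℝ)| ≤ R * m * Q := by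
        calc |∑ k, a k * (q k : ℝ)| ≤ ∑ k, |a k * (q k : ℝ)| := Finset.abs_sum_le_sum_abs _ _
          _ ≤ ∑ _k : Fin m, R * Q := by
              refine Finset.sum_le_sum fun k _ => ?_
              rw [abs_mul]
              have h1 : |(q k : ℝ)| ≤ Q := by
                rw [hQdef, ← Int.cast_abs, ← Int.cast_abs]
                exact_mod_cast hj k
              exact mul_le_mul (hbox k) h1 (abs_nonneg _) (le_trans (abs_nonneg _) (hbox k))
          _ = R * m * Q := by rw [Finset.sum_const, Finset.card_univ, Fintype.card_fin,
                nsmul_eq_mul]; ring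
      have hps : p ∈ s := by
        have h1 : |(p : ℝ)| ≤ R * m * Q + 1 := by
          have := abs_sub_abs_le_abs_sub (p : ℝ) (∑ k, a k * (q k : ℝ))
          rw [abs_sub_comm] at this
          linarith [hbound, le_of_lt hp, this]
        have h2 : ((|p| : ℤ) : ℝ) ≤ (N : ℝ) := by
          rw [Int.cast_abs]
          calc |(p:ℝ)| ≤ R * m * Q + 1 := h1
            _ ≤ (N : ℝ) := by
                rw [hNdef]
                push_cast
                linarith [Nat.le_ceil (R * m * Q)]
        have h3 : |p| ≤ (N : ℤ) := by exact_mod_cast h2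
        rw [hsdef, Finset.mem_Icc]
        exact ⟨neg_le_of_abs_le h3, le_of_abs_le h3⟩
      simp only [htdef, if_pos rfl]
      refine Set.mem_biUnion hps ?_
      rw [hval]
      have := abs_lt.1 hp
      exact ⟨by linarith [this.1], by linarith [this.2]⟩
    · have hval : L a j = a j := by
        rw [hLa]
        simp [hMdef, Matrix.updateRow_ne hjj, Matrix.one_apply]
      simp only [htdef, if_neg hjj]
      rw [hval]
      exact abs_le.1 (hbox j)
  -- volume computation
  have hvolT : volume (Set.pi Set.univ t) ≤
      ENNReal.ofReal ((2*R*m*Q + 5) * (2*ψ)) * (ENNReal.ofReal (2*R))^(m-1) := by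
    rw [volume_pi_pi]
    rw [← Finset.mul_prod_erase Finset.univ _ (Finset.mem_univ j₀)]
    have h1 : volume (t j₀) ≤ ENNReal.ofReal ((2*R*m*Q + 5) * (2*ψ)) := by
      simp only [htdef, if_pos rfl]
      calc volume (⋃ p ∈ s, Ioo ((p:ℝ) - ψ) ((p:ℝ) + ψ))
          ≤ ∑ p ∈ s, volume (Ioo ((p:ℝ) - ψ) ((p:ℝ) + ψ)) := measure_biUnion_finset_le _ _
        _ = ∑ _p ∈ s, ENNReal.ofReal (2*ψ) := by
            refine Finset.sum_congr rfl fun p _ => ?_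
            rw [Real.volume_Ioo]
            congr 1
            ring
        _ = (s.card : ℝ≥0∞) * ENNReal.ofReal (2*ψ) := by
            rw [Finset.sum_const, nsmul_eq_mul]
        _ ≤ ENNReal.ofReal (2*R*m*Q + 5) * ENNReal.ofReal (2*ψ) := by
            refine mul_le_mul_left ?_ _
            have hcard : s.card = 2 * N + 1 := by
              rw [hsdef, Int.card_Icc]
              omega
            rw [hcard]
            have : ((2 * N + 1 : ℕ) : ℝ≥0∞) = ENNReal.ofReal ((2 * N + 1 : ℕ) : ℝ) := by
              rw [ENNReal.ofReal_natCast]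
            rw [this]
            refine ENNReal.ofReal_le_ofReal ?_
            push_cast
            have hceil : (⌈R * m * Q⌉₊ : ℝ) < R * m * Q + 1 :=
              Nat.ceil_lt_add_one (by positivity)
            linarith [show (N:ℝ) = ⌈R * m * Q⌉₊ + 1 by rw [hNdef]; push_cast; ring]
        _ = ENNReal.ofReal ((2*R*m*Q + 5) * (2*ψ)) := by
            rw [← ENNReal.ofReal_mul (by positivity)]
    have h2 : ∏ j ∈ Finset.univ.erase j₀, volume (t j) = (ENNReal.ofReal (2*R))^(m-1) := by
      have : ∀ j ∈ Finset.univ.erase j₀, volume (t j) = ENNReal.ofReal (2*R) := by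
        intro j hjmem
        have hne : j ≠ j₀ := (Finset.mem_erase.1 hjmem).1
        simp only [htdef, if_neg hne]
        rw [Real.volume_Icc]
        congr 1
        ring
      rw [Finset.prod_congr rfl this, Finset.prod_const, Finset.card_erase_of_mem
        (Finset.mem_univ j₀), Finset.card_univ, Fintype.card_fin]
    rw [h2]
    exact mul_le_mul_left h1 _
  calc volume {a : Fin m → ℝ | (∀ j, |a j| ≤ R) ∧
        ∃ p : ℤ, |∑ j, a j * (q j : ℝ) - (p : ℝ)| < ψ}
      ≤ volume (L ⁻¹' (Set.pi Set.univ t)) := measure_mono hsub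
    _ = ENNReal.ofReal |(LinearMap.det L)⁻¹| * volume (Set.pi Set.univ t) :=
        MeasureTheory.Measure.addHaar_preimage_linearMap volume hdet0 _
    _ ≤ ENNReal.ofReal Q⁻¹ * (ENNReal.ofReal ((2*R*m*Q + 5) * (2*ψ)) *
        (ENNReal.ofReal (2*R))^(m-1)) := by
        rw [hdet, abs_inv]
        exact mul_le_mul_right hvolT _
    _ ≤ ENNReal.ofReal ((2*m*R + 5) * (2*ψ) * (2*R)^(m-1)) := by
        rw [← ENNReal.ofReal_pow (by linarith), ← ENNReal.ofReal_mul (by positivity),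
          ← ENNReal.ofReal_mul (by positivity)]
        refine ENNReal.ofReal_le_ofReal ?_
        have hQinv : Q⁻¹ * Q = 1 := inv_mul_cancel₀ (ne_of_gt hQ0)
        have hQinv1 : Q⁻¹ ≤ 1 := by
          rw [← hQinv]
          nlinarith
        have hQinvpos : 0 < Q⁻¹ := inv_pos.2 hQ0
        have key : Q⁻¹ * (2*R*(m:ℝ)*Q + 5) ≤ 2*m*R + 5 := by
          calc Q⁻¹ * (2*R*(m:ℝ)*Q + 5) = 2*R*(m:ℝ)*(Q⁻¹*Q) + 5*Q⁻¹ := by ring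
            _ = 2*R*(m:ℝ) + 5*Q⁻¹ := by rw [hQinv]; ring
            _ ≤ 2*m*R + 5 := by nlinarith
        have h2 : (0:ℝ) ≤ (2*ψ)*(2*R)^(m-1) := by positivity
        calc Q⁻¹*((2*R*(m:ℝ)*Q+5)*(2*ψ)*(2*R)^(m-1))
            = (Q⁻¹*(2*R*(m:ℝ)*Q+5)) * ((2*ψ)*(2*R)^(m-1)) := by ring
          _ ≤ (2*(m:ℝ)*R+5) * ((2*ψ)*(2*R)^(m-1)) := mul_le_mul_of_nonneg_right key h2
          _ = (2*(m:ℝ)*R+5)*(2*ψ)*(2*R)^(m-1) := by ring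

lemma myCell (n m : ℕ) (R ψ : ℝ) (hR : 1 ≤ R) (hψ : 0 < ψ) (hψ1 : ψ ≤ 1)
    (q : Fin m → ℤ) (j₀ : Fin m) (hj : ∀ j, |q j| ≤ |q j₀|) (hq0 : 1 ≤ |q j₀|) :
    volume {A : Fin n → Fin m → ℝ | (∀ i j, |A i j| ≤ R) ∧
      ∃ p : Fin n → ℤ, ∀ i, |∑ j, A i j * (q j : ℝ) - (p i : ℝ)| < ψ}
      ≤ (ENNReal.ofReal ((2*m*R + 5) * (2*ψ) * (2*R)^(m-1)))^n := by
  have hset : {A : Fin n → Fin m → ℝ | (∀ i j, |A i j| ≤ R) ∧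
      ∃ p : Fin n → ℤ, ∀ i, |∑ j, A i j * (q j : ℝ) - (p i : ℝ)| < ψ} =
      Set.pi Set.univ (fun _ : Fin n =>
        {a : Fin m → ℝ | (∀ j, |a j| ≤ R) ∧ ∃ p : ℤ, |∑ j, a j * (q j : ℝ) - (p : ℝ)| < ψ}) := by
    ext A
    constructor
    · rintro ⟨hbox, p, hp⟩ i _
      exact ⟨fun j => hbox i j, p i, hp i⟩
    · intro h
      refine ⟨fun i j => (h i (Set.mem_univ i)).1 j, fun i => (h i (Set.mem_univ i)).2.choose,
        fun i => (h i (Set.mem_univ i)).2.choose_spec⟩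
  rw [hset, volume_pi_pi]
  calc ∏ _i : Fin n, volume {a : Fin m → ℝ | (∀ j, |a j| ≤ R) ∧
        ∃ p : ℤ, |∑ j, a j * (q j : ℝ) - (p : ℝ)| < ψ}
      ≤ ∏ _i : Fin n, ENNReal.ofReal ((2*m*R + 5) * (2*ψ) * (2*R)^(m-1)) :=
        Finset.prod_le_prod' fun i _ => myRow m R ψ hR hψ hψ1 q j₀ hj hq0
    _ = (ENNReal.ofReal ((2*m*R + 5) * (2*ψ) * (2*R)^(m-1)))^n := by
        rw [Finset.prod_const, Finset.card_univ, Fintype.card_fin]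

lemma mySum (m : ℕ) (hm : 0 < m) (ε : ℝ) (hε : 0 < ε) :
    ∑' q : Fin m → ℤ, ENNReal.ofReal (‖q‖ ^ (-(m:ℝ) - ε)) ≠ ⊤ := by
  set t : ℝ := 1 + ε / m with htdef
  have hm' : (0:ℝ) < m := by exact_mod_cast hm
  have ht1 : 1 < t := by rw [htdef]; nlinarith [div_pos hε hm']
  have ht0 : 0 < t := lt_trans one_pos ht1
  set f : ℤ → ℝ := fun k => (((1:ℝ) + |(k:ℝ)|)/2) ^ (-t) with hfdef
  have hfpos : ∀ k, 0 < f k := by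
    intro k
    apply Real.rpow_pos_of_pos
    positivity
  -- pointwise bound
  have hpt : ∀ q : Fin m → ℤ,
      ENNReal.ofReal (‖q‖ ^ (-(m:ℝ) - ε)) ≤ ∏ j, ENNReal.ofReal (f (q j)) := by
    intro q
    rcases eq_or_ne q 0 with hq | hq
    · subst hq
      rw [norm_zero, Real.zero_rpow (by nlinarith [div_pos (mul_pos hm' one_pos) hm'] :
        -(m:ℝ) - ε ≠ 0)]
      simp only [ENNReal.ofReal_zero]
      exact zero_le
    · have hq1 : (1:ℝ) ≤ ‖q‖ := by
        obtain ⟨j, hj⟩ := Function.ne_iff.1 hq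
        calc (1:ℝ) ≤ ‖q j‖ := by
              rw [Int.norm_eq_abs]
              exact_mod_cast Int.one_le_abs hj
          _ ≤ ‖q‖ := norm_le_pi_norm q j
      have hq0 : (0:ℝ) < ‖q‖ := lt_of_lt_of_le one_pos hq1
      have hcoord : ∀ j, ((1:ℝ) + |(q j : ℝ)|)/2 ≤ ‖q‖ := by
        intro j
        have h1 : |(q j : ℝ)| ≤ ‖q‖ := by
          rw [← Int.norm_eq_abs]
          exact norm_le_pi_norm q j
        linarith
      have hprod : ∏ j, ((1:ℝ) + |(q j : ℝ)|)/2 ≤ ‖q‖ ^ (m:ℕ) := by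
        calc ∏ j, ((1:ℝ) + |(q j : ℝ)|)/2 ≤ ∏ _j : Fin m, ‖q‖ :=
              Finset.prod_le_prod (fun j _ => by positivity) (fun j _ => hcoord j)
          _ = ‖q‖ ^ (m:ℕ) := by rw [Finset.prod_const, Finset.card_univ, Fintype.card_fin]
      have hreal : ‖q‖ ^ (-(m:ℝ) - ε) ≤ ∏ j, f (q j) := by
        have h1 : ∏ j, f (q j) = (∏ j, ((1:ℝ) + |(q j : ℝ)|)/2) ^ (-t) := by
          rw [hfdef, ← Real.finset_prod_rpow _ _ (fun j _ => by positivity)]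
        have h2 : (‖q‖ ^ (m:ℕ)) ^ (-t) ≤ (∏ j, ((1:ℝ) + |(q j : ℝ)|)/2) ^ (-t) := by
          apply Real.rpow_le_rpow_of_nonpos (Finset.prod_pos fun j _ => by positivity) hprod
          linarith
        have h3 : (‖q‖ ^ (m:ℕ)) ^ (-t) = ‖q‖ ^ (-(m:ℝ) - ε) := by
          rw [← Real.rpow_natCast ‖q‖ m, ← Real.rpow_mul (le_of_lt hq0)]
          congr 1
          rw [htdef]
          field_simp
          ring
        rw [h1, ← h3]
        exact h2
      calc ENNReal.ofReal (‖q‖ ^ (-(m:ℝ) - ε)) ≤ ENNReal.ofReal (∏ j, f (q j)) :=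
            ENNReal.ofReal_le_ofReal hreal
        _ = ∏ j, ENNReal.ofReal (f (q j)) :=
            ENNReal.ofReal_prod_of_nonneg fun j _ => le_of_lt (hfpos (q j))
  -- summability of the one-dimensional sum
  have hfk : ∀ k : ℤ, f k = 2 ^ t * (1 / (1 + |(k:ℝ)|) ^ t) := by
    intro k
    show ((1 + |(k:ℝ)|)/2) ^ (-t) = _
    rw [Real.rpow_neg (by positivity), Real.div_rpow (by positivity) (by norm_num), inv_div]
    ring
  have hsummable : Summable f := by
    apply Summable.of_nat_of_neg <;>
    · apply Summable.congr (((Real.summable_one_div_nat_add_rpow 1 t).2 ht1).mul_left ((2:ℝ)^t))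
      intro n
      rw [hfk]
      have h1 : |(n:ℝ) + 1| = 1 + (n:ℝ) := by
        rw [abs_of_nonneg (by positivity)]
        ring
      rw [h1]
      norm_num [abs_of_nonneg (Nat.cast_nonneg n : (0:ℝ) ≤ (n:ℝ))]
  have hone : ∑' k : ℤ, ENNReal.ofReal (f k) ≠ ⊤ := by
    rw [← ENNReal.ofReal_tsum_of_nonneg (fun k => le_of_lt (hfpos k)) hsummable]
    exact ENNReal.ofReal_ne_top
  exact ne_top_of_le_ne_top (ENNReal.pow_ne_top hone)
    (le_trans (ENNReal.tsum_le_tsum hpt) (le_of_eq (myTsumPi m (fun k => ENNReal.ofReal (f k)))))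

lemma myNormOne {m : ℕ} (q : Fin m → ℤ) (hq : q ≠ 0) : 1 ≤ ‖q‖ := by
  obtain ⟨j, hj⟩ := Function.ne_iff.1 hq
  calc (1:ℝ) ≤ ‖q j‖ := by
        rw [Int.norm_eq_abs]
        exact_mod_cast Int.one_le_abs hj
    _ ≤ ‖q‖ := norm_le_pi_norm q j

lemma myKey (n m : ℕ) (hn : 0 < n) (hm : 0 < m) (δ : ℝ) (hδ : 0 < δ) :
    ∀ᵐ A : Fin n → Fin m → ℝ ∂volume,
      {q : Fin m → ℤ | ∃ p : Fin n → ℤ,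
        ‖(fun i => (∑ j, A i j * (q j : ℝ)) - (p i : ℝ))‖ <
          ‖q‖ ^ (-(m : ℝ) / n - δ)}.Finite := by
  have hn' : (0:ℝ) < n := by exact_mod_cast hn
  have hm' : (0:ℝ) < m := by exact_mod_cast hm
  set e : ℝ := -(m:ℝ)/n - δ with hedef
  have he_neg : e < 0 := by
    rw [hedef, neg_div]
    have h1 : 0 < (m:ℝ)/n := div_pos hm' hn'
    linarith
  set E : ℕ → (Fin m → ℤ) → Set (Fin n → Fin m → ℝ) := fun R q =>
    {A | (∀ i j, |A i j| ≤ (R:ℝ)+1) ∧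
      ∃ p : Fin n → ℤ, ∀ i, |∑ j, A i j * (q j : ℝ) - (p i : ℝ)| < ‖q‖ ^ e} with hEdef
  have hEmeas : ∀ R q, MeasurableSet (E R q) := by
    intro R q
    rw [hEdef]
    simp only
    rw [Set.setOf_and]
    apply MeasurableSet.inter
    · have : {A : Fin n → Fin m → ℝ | ∀ i j, |A i j| ≤ (R:ℝ)+1} =
          ⋂ i, ⋂ j, {A : Fin n → Fin m → ℝ | |A i j| ≤ (R:ℝ)+1} := by
        ext A; simp [Set.mem_iInter]
      rw [this]
      exact MeasurableSet.iInter fun i => MeasurableSet.iInter fun j =>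
        measurableSet_le ((measurable_pi_apply j).comp (measurable_pi_apply i)).abs
          measurable_const
    · have : {A : Fin n → Fin m → ℝ |
          ∃ p : Fin n → ℤ, ∀ i, |∑ j, A i j * (q j : ℝ) - (p i : ℝ)| < ‖q‖ ^ e} =
          ⋃ p : Fin n → ℤ, ⋂ i,
            {A : Fin n → Fin m → ℝ | |∑ j, A i j * (q j : ℝ) - (p i : ℝ)| < ‖q‖ ^ e} := by
        ext A; simp [Set.mem_iUnion, Set.mem_iInter]
      rw [this]
      refine MeasurableSet.iUnion fun p => MeasurableSet.iInter fun i => ?_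
      have hmeas : Measurable fun A : Fin n → Fin m → ℝ =>
          |∑ j, A i j * (q j : ℝ) - (p i : ℝ)| := by
        apply Measurable.abs
        apply Measurable.sub _ measurable_const
        exact Finset.measurable_sum _ fun j _ =>
          ((measurable_pi_apply j).comp (measurable_pi_apply i)).mul_const _
      exact measurableSet_lt hmeas measurable_const
  have hEsum : ∀ R : ℕ, ∑' q : Fin m → ℤ, volume (E R q) ≠ ⊤ := by
    intro R
    set R' : ℝ := (R:ℝ)+1 with hR'def
    have hR' : 1 ≤ R' := by
      rw [hR'def]
      have h0 : (0:ℝ) ≤ (R:ℝ) := Nat.cast_nonneg R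
      linarith
    set C : ℝ := (2*m*R'+5)*2*(2*R')^(m-1) with hCdef
    have hC0 : 0 ≤ C := by rw [hCdef]; positivity
    have hbound : ∀ q : Fin m → ℤ, volume (E R q) ≤
        ENNReal.ofReal (C^n) * ENNReal.ofReal (‖q‖ ^ (-(m:ℝ) - (n*δ))) := by
      intro q
      rcases eq_or_ne q 0 with rfl | hq
      · have hempty : E R 0 ⊆ (∅ : Set (Fin n → Fin m → ℝ)) := by
          rintro A ⟨-, p, hp⟩
          have h0 := hp ⟨0, hn⟩
          rw [norm_zero, Real.zero_rpow he_neg.ne] at h0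
          exact absurd h0 (not_lt.2 (abs_nonneg _))
        have : volume (E R 0) = 0 :=
          le_antisymm (le_trans (measure_mono hempty) (by simp)) zero_le
        rw [this]
        exact zero_le
      · have hq1 : (1:ℝ) ≤ ‖q‖ := myNormOne q hq
        have hqpos : (0:ℝ) < ‖q‖ := lt_of_lt_of_le one_pos hq1
        set ψ : ℝ := ‖q‖ ^ e with hψdef
        have hψ : 0 < ψ := Real.rpow_pos_of_pos hqpos e
        have hψ1 : ψ ≤ 1 := Real.rpow_le_one_of_one_le_of_nonpos hq1 he_neg.le
        have : Nonempty (Fin m) := ⟨⟨0, hm⟩⟩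
        obtain ⟨j₀, hj₀⟩ := Finite.exists_max (fun j => |q j|)
        have hq0 : 1 ≤ |q j₀| := by
          obtain ⟨j, hj⟩ := Function.ne_iff.1 hq
          exact le_trans (Int.one_le_abs hj) (hj₀ j)
        calc volume (E R q)
            ≤ (ENNReal.ofReal ((2*m*R' + 5) * (2*ψ) * (2*R')^(m-1)))^n :=
              myCell n m R' ψ hR' hψ hψ1 q j₀ hj₀ hq0
          _ = ENNReal.ofReal (((2*m*R' + 5) * (2*ψ) * (2*R')^(m-1))^n) := by
              rw [← ENNReal.ofReal_pow (by positivity)]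
          _ = ENNReal.ofReal (C^n * ψ^n) := by
              congr 1
              rw [hCdef, ← mul_pow]
              congr 1
              ring
          _ = ENNReal.ofReal (C^n) * ENNReal.ofReal (ψ^n) := by
              rw [ENNReal.ofReal_mul (by positivity)]
          _ = ENNReal.ofReal (C^n) * ENNReal.ofReal (‖q‖ ^ (-(m:ℝ) - (n*δ))) := by
              congr 2
              rw [hψdef, ← Real.rpow_natCast (‖q‖ ^ e) n, ← Real.rpow_mul (norm_nonneg q)]
              congr 1
              rw [hedef]
              field_simp
    have hfin : ∑' q : Fin m → ℤ, ENNReal.ofReal (‖q‖ ^ (-(m:ℝ) - (n*δ))) ≠ ⊤ :=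
      mySum m hm (n*δ) (mul_pos hn' hδ)
    exact ne_top_of_le_ne_top (ENNReal.mul_ne_top ENNReal.ofReal_ne_top hfin)
      (le_trans (ENNReal.tsum_le_tsum hbound) (le_of_eq ENNReal.tsum_mul_left))
  have hBC : ∀ᵐ A : Fin n → Fin m → ℝ ∂volume, ∀ R : ℕ, {q | A ∈ E R q}.Finite :=
    ae_all_iff.2 fun R => myBC (hEmeas R) (hEsum R)
  filter_upwards [hBC] with A hA
  set R : ℕ := ⌈‖A‖⌉₊ with hRdef
  apply (hA R).subset
  rintro q ⟨p, hp⟩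
  have hq : q ≠ 0 := by
    rintro rfl
    rw [norm_zero, Real.zero_rpow he_neg.ne] at hp
    exact absurd hp (not_lt.2 (norm_nonneg _))
  have hq1 : (1:ℝ) ≤ ‖q‖ := myNormOne q hq
  have hψpos : (0:ℝ) < ‖q‖ ^ e :=
    Real.rpow_pos_of_pos (lt_of_lt_of_le one_pos hq1) e
  refine ⟨?_, p, fun i => ?_⟩
  · intro i j
    calc |A i j| = ‖A i j‖ := (Real.norm_eq_abs _).symm
      _ ≤ ‖A i‖ := norm_le_pi_norm (A i) j
      _ ≤ ‖A‖ := norm_le_pi_norm A i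
      _ ≤ (R:ℝ) + 1 := by
          rw [hRdef]
          have := Nat.le_ceil ‖A‖
          linarith
  · have h2 := (pi_norm_lt_iff hψpos).1 hp i
    simpa [Real.norm_eq_abs] using h2

/-- For almost every real `n × m` matrix `A` (Lebesgue), for any `δ > 0`, there are at
most finitely many `q ∈ ℤ^m` with `‖Aq - p‖_∞ < ‖q‖_∞ ^ (-m/n - δ)` for some `p ∈ ℤ^n`. -/
theorem stmt0 (n m : ℕ) (hn : 0 < n) (hm : 0 < m) :
    ∀ᵐ A : Fin n → Fin m → ℝ ∂volume, ∀ δ : ℝ, 0 < δ →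
      {q : Fin m → ℤ | ∃ p : Fin n → ℤ,
        ‖(fun i => (∑ j, A i j * (q j : ℝ)) - (p i : ℝ))‖ <
          ‖q‖ ^ (-(m : ℝ) / n - δ)}.Finite := by
  have hn' : (0:ℝ) < n := by exact_mod_cast hn
  have hm' : (0:ℝ) < m := by exact_mod_cast hm
  filter_upwards [ae_all_iff.2
    (fun k : ℕ => myKey n m hn hm (1/((k:ℝ)+1)) (by positivity))] with A hA δ hδ
  obtain ⟨k, hk⟩ := exists_nat_one_div_lt hδ
  refine (hA k).subset ?_
  rintro q ⟨p, hp⟩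
  refine ⟨p, lt_of_lt_of_le hp ?_⟩
  have hne : ∀ x : ℝ, 0 < x → -(m:ℝ)/n - x ≠ 0 := by
    intro x hx
    rw [neg_div]
    have h1 : 0 < (m:ℝ)/n := div_pos hm' hn'
    intro h
    linarith
  rcases eq_or_ne q 0 with rfl | hq
  · rw [norm_zero, Real.zero_rpow (hne _ hδ), Real.zero_rpow (hne _ (by positivity))]
  · exact Real.rpow_le_rpow_of_exponent_le (myNormOne q hq) (by linarith [hk.le])
end

section
/- Let M, N, K be positive integers with K ≥ (M+N)/gcd(M,N). Taking g = M/gcd(M,N), one has g ∈ {1,…,K}, min{K−g, ⌊gN/M⌋} = gN/M (which is an integer), and the bound gNK/min{K, ⌊g(N+M)/M⌋} evaluated at this g equals K·MN/(M+N). -/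
/-- With `K ≥ (M+N)/gcd(M,N)` and `g = M/gcd(M,N)`: `g ∈ {1,…,K}`,
`min(K-g, ⌊gN/M⌋) = gN/M` exactly, and `gNK/min(K, ⌊g(N+M)/M⌋) = K·MN/(M+N)`. -/
theorem stmt15 (M N K : ℕ) (hM : 0 < M) (hN : 0 < N) (hK : 0 < K)
    (hKbig : (M + N) / Nat.gcd M N ≤ K) :
    1 ≤ M / Nat.gcd M N ∧ M / Nat.gcd M N ≤ K ∧
      M ∣ (M / Nat.gcd M N) * N ∧
      min (K - M / Nat.gcd M N) ((M / Nat.gcd M N) * N / M) =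
        (M / Nat.gcd M N) * N / M ∧
      ((M / Nat.gcd M N : ℕ) : ℝ) * N * K /
          ((min K ((M / Nat.gcd M N) * (N + M) / M) : ℕ) : ℝ) =
        (K : ℝ) * M * N / (M + N) := by
  set d := Nat.gcd M N with hd
  have hdpos : 0 < d := Nat.gcd_pos_of_pos_left _ hM
  obtain ⟨m, hm⟩ : d ∣ M := Nat.gcd_dvd_left M N
  obtain ⟨n, hn⟩ : d ∣ N := Nat.gcd_dvd_right M N
  have hmpos : 0 < m := by
    rcases Nat.eq_zero_or_pos m with h | h
    · simp [h] at hm; omega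
    · exact h
  have hnpos : 0 < n := by
    rcases Nat.eq_zero_or_pos n with h | h
    · simp [h] at hn; omega
    · exact h
  have hMd : M / d = m := by rw [hm, Nat.mul_div_cancel_left _ hdpos]
  have hMNd : (M + N) / d = m + n := by
    rw [hm, hn, ← Nat.mul_add, Nat.mul_div_cancel_left _ hdpos]
  rw [hMNd] at hKbig
  have h1 : m * N = n * M := by rw [hm, hn]; ring
  have h2 : m * N / M = n := by rw [h1, Nat.mul_div_cancel _ hM]
  have h3 : m * (N + M) = (n + m) * M := by rw [hm, hn]; ring
  have h4 : m * (N + M) / M = n + m := by rw [h3, Nat.mul_div_cancel _ hM]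
  rw [hMd]
  refine ⟨hmpos, by omega, ⟨n, by rw [h1, Nat.mul_comm]⟩, by rw [h2]; omega, ?_⟩
  rw [h4, min_eq_right (by omega)]
  have hd' : (0:ℝ) < d := by exact_mod_cast hdpos
  have hmn : (0:ℝ) < (m:ℝ) + n := by positivity
  rw [hm, hn]
  push_cast
  field_simp
  ring
end

section
/- Let f₁,…,f_n : U → ℝ be analytic functions on a connected open set U ⊆ ℝ^d such that 1, f₁,…,f_n are linearly independent over ℝ. Then for almost every x ∈ U, the partial derivatives of f = (f₁,…,f_n) at x up to some finite order span ℝ^n (i.e., f is a nondegenerate map). -/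
open MeasureTheory

/-- Key pointwise result: at every point of `U`, the derivatives of all orders `≥ 1` span. -/
theorem stmt17_aux (d n : ℕ)
    (U : Set (Fin d → ℝ)) (hU : IsOpen U) (hUconn : IsConnected U)
    (f : Fin n → (Fin d → ℝ) → ℝ)
    (hf : ∀ i, AnalyticOnNhd ℝ (f i) U)
    (hli : LinearIndependent ℝ (fun i : Option (Fin n) =>
      (Option.elim i (fun _ => (1 : ℝ)) (fun j => f j) : (Fin d → ℝ) → ℝ) ∘
        (Subtype.val : U → (Fin d → ℝ))))
    (x : Fin d → ℝ) (hx : x ∈ U) :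
    Submodule.span ℝ {y : Fin n → ℝ | ∃ k : ℕ, 1 ≤ k ∧
        ∃ v : Fin k → (Fin d → ℝ),
          y = fun i => iteratedFDeriv ℝ k (f i) x v} = ⊤ := by
  set S : Set (Fin n → ℝ) := {y : Fin n → ℝ | ∃ k : ℕ, 1 ≤ k ∧
    ∃ v : Fin k → (Fin d → ℝ), y = fun i => iteratedFDeriv ℝ k (f i) x v} with hS
  by_contra hne
  obtain ⟨φ, hφ0, hφ⟩ := Submodule.exists_dual_map_eq_bot_of_lt_top
    (lt_top_iff_ne_top.2 hne) inferInstance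
  have hker : ∀ y ∈ S, φ y = 0 := by
    intro y hy
    have : φ y ∈ (Submodule.span ℝ S).map φ := ⟨y, Submodule.subset_span hy, rfl⟩
    rw [hφ] at this
    simpa using this
  set c : Fin n → ℝ := fun i => φ (Pi.single i 1) with hc
  have hsingle : ∀ i : Fin n, (fun j => if i = j then (1:ℝ) else 0) = Pi.single i 1 := by
    intro i; funext j; simp [Pi.single_apply, eq_comm]
  have hφ_eq : ∀ y : Fin n → ℝ, φ y = ∑ i, y i * c i := by
    intro y
    rw [φ.pi_apply_eq_sum_univ y]
    refine Finset.sum_congr rfl fun i _ => ?_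
    rw [hsingle i]; simp [hc, smul_eq_mul]
  have hc0 : ∃ i, c i ≠ 0 := by
    by_contra h
    push_neg at h
    apply hφ0
    ext y
    simp [hφ_eq, h]
  -- the function g = ∑ c i * f i
  set g : (Fin d → ℝ) → ℝ := fun u => ∑ i, (c i • f i) u with hg
  have hganalytic : AnalyticOnNhd ℝ g U := by
    rw [show g = ∑ i, (c i • f i) from funext fun u => (Finset.sum_apply u _ _).symm]
    apply Finset.analyticOnNhd_sum
    intro i _
    have : AnalyticOnNhd ℝ (fun u => c i * f i u) U :=
      (analyticOnNhd_const).mul (hf i)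
    exact this
  have hcd : ∀ (k : ℕ) (i : Fin n), ContDiffOn ℝ k (f i) U :=
    fun k i => (hf i).contDiffOn hU.uniqueDiffOn
  -- iterated derivatives of g are given by φ applied to derivatives of f
  have hderiv : ∀ (k : ℕ) (v : Fin k → (Fin d → ℝ)),
      iteratedFDeriv ℝ k g x v = φ (fun i => iteratedFDeriv ℝ k (f i) x v) := by
    intro k v
    have h1 : iteratedFDeriv ℝ k g x = iteratedFDerivWithin ℝ k g U x :=
      (iteratedFDerivWithin_of_isOpen k hU hx).symm
    have h2 : iteratedFDerivWithin ℝ k g U x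
        = ∑ i, iteratedFDerivWithin ℝ k (c i • f i) U x :=
      by rw [show g = ∑ i, (c i • f i) from funext fun u => (Finset.sum_apply u _ _).symm]; exact (iteratedFDerivWithin_sum_apply hU.uniqueDiffOn hx
        (fun i _ => ((hcd k i).const_smul (c i)).contDiffWithinAt hx))
    have h3 : ∀ i : Fin n, iteratedFDerivWithin ℝ k (c i • f i) U x
        = c i • iteratedFDerivWithin ℝ k (f i) U x :=
      fun i => iteratedFDerivWithin_const_smul_apply ((hcd k i).contDiffWithinAt hx) hU.uniqueDiffOn hx
    have h4 : ∀ i : Fin n, iteratedFDerivWithin ℝ k (f i) U x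
        = iteratedFDeriv ℝ k (f i) x :=
      fun i => iteratedFDerivWithin_of_isOpen k hU hx
    rw [h1, h2]
    simp only [ContinuousMultilinearMap.sum_apply]
    rw [hφ_eq]
    congr 1
    ext i
    rw [h3 i, h4 i]
    simp [smul_eq_mul, mul_comm]
  -- derivatives of g of order ≥ 1 vanish at x
  have hgzero : ∀ k : ℕ, 1 ≤ k → ∀ v : Fin k → (Fin d → ℝ),
      iteratedFDeriv ℝ k g x v = 0 := by
    intro k hk v
    rw [hderiv k v]
    exact hker _ ⟨k, hk, v, rfl⟩
  -- the function h = g - g x is analytic, with all derivatives vanishing at x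
  set C : ℝ := g x with hC
  set h : (Fin d → ℝ) → ℝ := fun u => g u + (-C) with hh
  have hhanalytic : AnalyticOnNhd ℝ h U := fun z hz =>
    ((hganalytic z hz).add analyticAt_const)
  have hhderiv : ∀ (k : ℕ) (v : Fin k → (Fin d → ℝ)),
      iteratedFDeriv ℝ k h x v = 0 := by
    intro k v
    rcases Nat.eq_zero_or_pos k with hk | hk
    · subst hk
      simp [hh, hC, iteratedFDeriv_zero_apply]
    · have hcdg : ContDiffOn ℝ k g U := by
        apply ContDiffOn.sum
        intro i _
        exact (hcd k i).const_smul (c i)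
      have e1 : iteratedFDeriv ℝ k h x = iteratedFDerivWithin ℝ k h U x :=
        (iteratedFDerivWithin_of_isOpen k hU hx).symm
      have e2 : iteratedFDerivWithin ℝ k h U x
          = iteratedFDerivWithin ℝ k g U x
            + iteratedFDerivWithin ℝ k (fun _ => -C) U x := by
        exact iteratedFDerivWithin_add_apply' (hcdg.contDiffWithinAt hx) contDiffWithinAt_const hU.uniqueDiffOn hx
      have e3 : iteratedFDerivWithin ℝ k (fun _ : Fin d → ℝ => -C) U x = 0 :=
        congrFun (iteratedFDerivWithin_const_of_ne (Nat.one_le_iff_ne_zero.mp hk) (-C) U) x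
      have e4 : iteratedFDerivWithin ℝ k g U x = iteratedFDeriv ℝ k g x :=
        iteratedFDerivWithin_of_isOpen k hU hx
      rw [e1, e2, e3, e4, add_zero]
      exact hgzero k hk v
  -- hence h vanishes in a neighborhood of x, by the power series expansion
  obtain ⟨p, r, hpr⟩ : ∃ p r, HasFPowerSeriesOnBall h p x r := by
    obtain ⟨p, hp⟩ := hhanalytic x hx
    obtain ⟨r, hr⟩ := hp
    exact ⟨p, r, hr⟩
  have hev : h =ᶠ[nhds x] 0 := by
    have : ∀ y ∈ Metric.eball (0 : Fin d → ℝ) r, h (x + y) = 0 := by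
      intro y hy
      have hsum := hpr.hasSum_iteratedFDeriv hy
      have : HasSum (fun k : ℕ => (0 : ℝ)) (h (x + y)) := by
        refine (congrArg (HasSum · (h (x + y))) ?_).mpr hsum
        funext k
        rw [hhderiv k _]
        simp
      simpa using this.unique hasSum_zero
    have hball : Metric.eball x r ∈ nhds x := Metric.eball_mem_nhds x hpr.r_pos
    filter_upwards [hball] with z hz
    have hz' : z - x ∈ Metric.eball (0 : Fin d → ℝ) r := by
      have he : edist (z - x) (0 : Fin d → ℝ) = edist z x := by
        simpa using edist_sub_right z x x
      simpa [Metric.mem_eball, he] using hz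
    have := this (z - x) hz'
    simpa using this
  have hzero : Set.EqOn h 0 U :=
    hhanalytic.eqOn_zero_of_preconnected_of_eventuallyEq_zero
      hUconn.isPreconnected hx hev
  -- contradiction with linear independence
  have := (Fintype.linearIndependent_iff.mp hli)
    (fun o : Option (Fin n) => o.elim (-C) c)
  have hrel : ∀ i, (Option.elim i (-C) c) = 0 := by
    apply this
    ext ⟨u, hu⟩
    have h0 : h u = 0 := hzero hu
    simp only [Finset.sum_apply, Pi.smul_apply, Function.comp_apply]
    rw [Fintype.sum_option]
    simp only [Option.elim]
    have heq : (-C) * 1 + ∑ i : Fin n, c i * f i u = h u := by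
      simp only [hh, hg, Pi.smul_apply, smul_eq_mul, neg_mul, one_mul]
      ring
    simpa [smul_eq_mul] using heq.trans h0
  obtain ⟨i, hi⟩ := hc0
  exact hi (hrel (some i))

/-- If `f₁,…,f_n` are analytic on a connected open `U ⊆ ℝ^d` and `1, f₁,…,f_n` are
linearly independent over `ℝ` (as functions on `U`), then for almost every `x ∈ U`
the partial derivatives of `f = (f₁,…,f_n)` at `x` up to some finite order span `ℝ^n`. -/
theorem stmt17 (d n : ℕ) (hd : 0 < d) (hn : 0 < n)
    (U : Set (Fin d → ℝ)) (hU : IsOpen U) (hUconn : IsConnected U)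
    (f : Fin n → (Fin d → ℝ) → ℝ)
    (hf : ∀ i, AnalyticOnNhd ℝ (f i) U)
    (hli : LinearIndependent ℝ (fun i : Option (Fin n) =>
      (Option.elim i (fun _ => (1 : ℝ)) (fun j => f j) : (Fin d → ℝ) → ℝ) ∘
        (Subtype.val : U → (Fin d → ℝ)))) :
    ∀ᵐ x ∂(volume.restrict U), ∃ l : ℕ,
      Submodule.span ℝ {y : Fin n → ℝ | ∃ k : ℕ, 1 ≤ k ∧ k ≤ l ∧
        ∃ v : Fin k → (Fin d → ℝ),
          y = fun i => iteratedFDeriv ℝ k (f i) x v} = ⊤ := by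
  have hmem : ∀ᵐ x ∂(volume.restrict U), x ∈ U :=
    ae_restrict_mem hU.measurableSet
  filter_upwards [hmem] with x hx
  -- the span of all derivatives at x is ⊤
  have hspan := stmt17_aux d n U hU hUconn f hf hli x hx
  set T : ℕ → Set (Fin n → ℝ) := fun l => {y : Fin n → ℝ | ∃ k : ℕ, 1 ≤ k ∧ k ≤ l ∧
    ∃ v : Fin k → (Fin d → ℝ), y = fun i => iteratedFDeriv ℝ k (f i) x v} with hT
  have hTmono : Monotone (fun l => Submodule.span ℝ (T l)) := by
    intro a b hab
    apply Submodule.span_mono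
    rintro y ⟨k, hk1, hk2, v, rfl⟩
    exact ⟨k, hk1, hk2.trans hab, v, rfl⟩
  have hUnion : {y : Fin n → ℝ | ∃ k : ℕ, 1 ≤ k ∧
      ∃ v : Fin k → (Fin d → ℝ), y = fun i => iteratedFDeriv ℝ k (f i) x v}
      = ⋃ l : ℕ, T l := by
    ext y
    constructor
    · rintro ⟨k, hk1, v, rfl⟩
      exact Set.mem_iUnion.2 ⟨k, k, hk1, le_rfl, v, rfl⟩
    · intro hy
      obtain ⟨l, k, hk1, _, v, rfl⟩ := Set.mem_iUnion.1 hy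
      exact ⟨k, hk1, v, rfl⟩
  rw [hUnion, Submodule.span_iUnion] at hspan
  -- each standard basis vector lies in some span (T l)
  have hbasis : ∀ i : Fin n, ∃ l : ℕ, Pi.single i (1 : ℝ) ∈ Submodule.span ℝ (T l) := by
    intro i
    have : Pi.single i (1 : ℝ) ∈ (⨆ l : ℕ, Submodule.span ℝ (T l)) := hspan ▸ Submodule.mem_top
    exact Submodule.mem_iSup_of_directed (fun _ => _) (hTmono.directed_le) |>.1 this
  choose lv hlv using hbasis
  refine ⟨Finset.univ.sup lv, ?_⟩
  rw [eq_top_iff, ← (Pi.basisFun ℝ (Fin n)).span_eq]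
  apply Submodule.span_le.2
  rintro y ⟨i, rfl⟩
  have : Pi.single i (1 : ℝ) ∈ Submodule.span ℝ (T (Finset.univ.sup lv)) :=
    hTmono (Finset.le_sup (Finset.mem_univ i)) (hlv i)
  simpa [Pi.basisFun_apply] using this
end
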